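/- arXiv:2305.15408 — 2 statements merged into one kernel-verified Lean document; each statement's English description precedes it below -/
import Mathlib

section
/- Let σ : ℝ → ℝ be the GeLU function σ(x) = x·Φ(x), where Φ is the standard normal cumulative distribution function. For every M > 0, every λ > 2M, and all a, b ∈ [-M, M], one has |σ((a+b)/λ) + σ((-a-b)/λ) − σ((a−b)/λ) − σ((−a+b)/λ) − 8ab/(√(2π)·λ²)| ≤ 60·M³/λ³. -/
/-- The standard normal cumulative distribution function
`Φ(x) = (1/√(2π)) ∫_{-∞}^x e^{-t²/2} dt`. -/
noncomputable def stdNormalCDF (x : ℝ) : ℝ :=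
  (1 / Real.sqrt (2 * Real.pi)) * ∫ t in Set.Iic x, Real.exp (-(t ^ 2) / 2)

/-- The GeLU activation function `σ(x) = x·Φ(x)`. -/
noncomputable def gelu (x : ℝ) : ℝ := x * stdNormalCDF x

lemma gauss_integrable : MeasureTheory.Integrable (fun t : ℝ => Real.exp (-(t ^ 2) / 2)) := by
  have h := integrable_exp_neg_mul_sq (by norm_num : (0:ℝ) < 1/2)
  convert h using 2 with t
  ring_nf

lemma gelu_symm (x : ℝ) :
    gelu x + gelu (-x)
      = (1 / Real.sqrt (2 * Real.pi)) * x * ∫ t in (-x)..x, Real.exp (-(t ^ 2) / 2) := by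
  have hint := gauss_integrable
  rw [← intervalIntegral.integral_Iic_sub_Iic hint.integrableOn hint.integrableOn]
  simp only [gelu, stdNormalCDF]
  ring

lemma key (x : ℝ) :
    |gelu x + gelu (-x) - 2 / Real.sqrt (2 * Real.pi) * x ^ 2| ≤ x ^ 4 := by
  have hpi : (1:ℝ) ≤ Real.sqrt (2 * Real.pi) := by
    rw [show (1:ℝ) = Real.sqrt 1 by simp]
    exact Real.sqrt_le_sqrt (by nlinarith [Real.pi_gt_three])
  have hc : 0 < Real.sqrt (2 * Real.pi) := by linarith
  have h1 : (∫ t in (-x)..x, (1:ℝ)) = 2 * x := by simp; ring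
  have hsub : (∫ t in (-x)..x, Real.exp (-(t ^ 2) / 2)) - (∫ t in (-x)..x, (1:ℝ))
      = ∫ t in (-x)..x, (Real.exp (-(t ^ 2) / 2) - 1) := by
    rw [← intervalIntegral.integral_sub gauss_integrable.intervalIntegrable
      intervalIntegrable_const]
  have hbound : |∫ t in (-x)..x, (Real.exp (-(t ^ 2) / 2) - 1)| ≤ x ^ 2 / 2 * |x - (-x)| := by
    rw [← Real.norm_eq_abs]
    apply intervalIntegral.norm_integral_le_of_norm_le_const
    intro t ht
    have ht2 : t ^ 2 ≤ x ^ 2 := by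
      rcases Set.mem_uIoc.mp ht with h | h
      · nlinarith [h.1, h.2]
      · nlinarith [h.1, h.2]
    have he1 : Real.exp (-(t ^ 2) / 2) ≤ 1 := by
      rw [show (1:ℝ) = Real.exp 0 by simp]
      apply Real.exp_le_exp.mpr; nlinarith [sq_nonneg t]
    have he2 : 1 - t ^ 2 / 2 ≤ Real.exp (-(t ^ 2) / 2) := by
      have := Real.add_one_le_exp (-(t ^ 2) / 2)
      linarith
    rw [Real.norm_eq_abs, abs_le]
    constructor <;> nlinarith
  have heq : gelu x + gelu (-x) - 2 / Real.sqrt (2 * Real.pi) * x ^ 2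
      = (1 / Real.sqrt (2 * Real.pi)) * x *
        (∫ t in (-x)..x, (Real.exp (-(t ^ 2) / 2) - 1)) := by
    rw [← hsub, h1, gelu_symm]
    field_simp
  rw [heq, abs_mul, abs_mul]
  have : |1 / Real.sqrt (2 * Real.pi)| ≤ 1 := by
    rw [abs_of_pos (by positivity)]
    rw [div_le_one hc]; exact hpi
  calc |1 / Real.sqrt (2 * Real.pi)| * |x| * |∫ t in (-x)..x, (Real.exp (-(t ^ 2) / 2) - 1)|
      ≤ 1 * |x| * (x ^ 2 / 2 * |x - (-x)|) := by
        apply mul_le_mul (mul_le_mul this le_rfl (abs_nonneg _) zero_le_one) hbound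
          (abs_nonneg _) (by positivity)
    _ ≤ x ^ 4 := by
        rw [show x - (-x) = 2 * x by ring, abs_mul]
        rw [abs_of_nonneg (by norm_num : (0:ℝ) ≤ 2)]
        rcases abs_cases x with ⟨h, _⟩ | ⟨h, _⟩ <;> rw [h] <;> nlinarith [sq_nonneg x]

/-- For `M > 0`, `λ > 2M` and `a, b ∈ [-M, M]`, the symmetrized combination of GeLU
values approximates `8ab/(√(2π)·λ²)` with error at most `60·M³/λ³`. -/
theorem gelu_combination_approx (M lam : ℝ) (hM : 0 < M) (hlam : 2 * M < lam)
    (a b : ℝ) (ha : a ∈ Set.Icc (-M) M) (hb : b ∈ Set.Icc (-M) M) :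
    |gelu ((a + b) / lam) + gelu ((-a - b) / lam) - gelu ((a - b) / lam)
        - gelu ((-a + b) / lam) - 8 * a * b / (Real.sqrt (2 * Real.pi) * lam ^ 2)|
      ≤ 60 * M ^ 3 / lam ^ 3 := by
  have hlam0 : 0 < lam := by linarith
  set u := (a + b) / lam with hu
  set v := (a - b) / lam with hv
  have e1 : (-a - b) / lam = -u := by rw [hu]; ring
  have e2 : (-a + b) / lam = -v := by rw [hv]; ring
  have hc : 0 < Real.sqrt (2 * Real.pi) := Real.sqrt_pos.mpr (by positivity)
  have htarget : 8 * a * b / (Real.sqrt (2 * Real.pi) * lam ^ 2)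
      = 2 / Real.sqrt (2 * Real.pi) * u ^ 2 - 2 / Real.sqrt (2 * Real.pi) * v ^ 2 := by
    rw [hu, hv]; field_simp; ring
  rw [e1, e2, htarget]
  have h1 := key u
  have h2 := key v
  have hrw : gelu u + gelu (-u) - gelu v - gelu (-v) -
      (2 / Real.sqrt (2 * Real.pi) * u ^ 2 - 2 / Real.sqrt (2 * Real.pi) * v ^ 2)
      = (gelu u + gelu (-u) - 2 / Real.sqrt (2 * Real.pi) * u ^ 2)
        - (gelu v + gelu (-v) - 2 / Real.sqrt (2 * Real.pi) * v ^ 2) := by ring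
  rw [hrw]
  calc |_ - _| ≤ |gelu u + gelu (-u) - 2 / Real.sqrt (2 * Real.pi) * u ^ 2|
        + |gelu v + gelu (-v) - 2 / Real.sqrt (2 * Real.pi) * v ^ 2| := abs_sub _ _
    _ ≤ u ^ 4 + v ^ 4 := add_le_add h1 h2
    _ ≤ 60 * M ^ 3 / lam ^ 3 := by
        obtain ⟨ha1, ha2⟩ := ha
        obtain ⟨hb1, hb2⟩ := hb
        have habs : ∀ w : ℝ, |w| ≤ 2 * M → (w / lam) ^ 4 ≤ 8 * M ^ 3 / lam ^ 3 := by
          intro w hw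
          have hw1 : w ^ 2 ≤ (2 * M) ^ 2 := sq_le_sq' (by linarith [abs_le.mp hw]) (abs_le.mp hw).2
          have h4 : w ^ 4 ≤ (2 * M) ^ 4 := by nlinarith [sq_nonneg w]
          have : (w / lam) ^ 4 ≤ (2 * M) ^ 4 / lam ^ 4 := by
            rw [div_pow]
            exact div_le_div_of_nonneg_right h4 (by positivity) |>.trans le_rfl
          refine this.trans ?_
          rw [div_le_div_iff₀ (by positivity) (by positivity)]
          nlinarith [mul_le_mul_of_nonneg_left hlam.le
            (by positivity : (0:ℝ) ≤ 8 * M ^ 3 * lam ^ 3)]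
        have hu4 := habs (a + b) (by rw [abs_le]; constructor <;> linarith)
        have hv4 := habs (a - b) (by rw [abs_le]; constructor <;> linarith)
        rw [hu, hv]
        have : 8 * M ^ 3 / lam ^ 3 + 8 * M ^ 3 / lam ^ 3 ≤ 60 * M ^ 3 / lam ^ 3 := by
          rw [← add_div, div_le_div_iff₀ (by positivity) (by positivity)]
          nlinarith [pow_pos hM 3, pow_pos hlam0 3]
        linarith [hu4, hv4]
end

section
/- Let σ : ℝ → ℝ be the GeLU function σ(x) = x·Φ(x), where Φ is the standard normal cumulative distribution function. For every M > 0 and every λ > 2M, define o(a,b) = (√(2π)·λ²/8)·(σ((a+b)/λ) + σ((-a-b)/λ) − σ((a−b)/λ) − σ((−a+b)/λ)). Then for all a, b ∈ [-M, M], one has |o(a,b) − a·b| ≤ 100·M³/λ. -/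
set_option maxHeartbeats 1000000

/-- The rescaled symmetrized GeLU combination
`o(a,b) = (√(2π)·λ²/8)·(σ((a+b)/λ) + σ((-a-b)/λ) − σ((a−b)/λ) − σ((−a+b)/λ))`. -/
noncomputable def geluProd (lam a b : ℝ) : ℝ :=
  Real.sqrt (2 * Real.pi) * lam ^ 2 / 8 *
    (gelu ((a + b) / lam) + gelu ((-a - b) / lam) - gelu ((a - b) / lam)
      - gelu ((-a + b) / lam))

open MeasureTheory intervalIntegral

lemma f_integrable : Integrable (fun t : ℝ => Real.exp (-(t ^ 2) / 2)) := by
  have := integrable_exp_neg_mul_sq (b := (1/2 : ℝ)) (by norm_num)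
  convert this using 2 with t
  ring_nf

lemma gelu_add_neg (x : ℝ) :
    gelu x + gelu (-x)
      = x * (1 / Real.sqrt (2 * Real.pi)) * (2 * ∫ t in (0:ℝ)..x, Real.exp (-(t ^ 2) / 2)) := by
  have hint := f_integrable
  have h1 : (∫ t in Set.Iic x, Real.exp (-(t ^ 2) / 2))
      - (∫ t in Set.Iic (-x), Real.exp (-(t ^ 2) / 2))
      = ∫ t in (-x)..x, Real.exp (-(t ^ 2) / 2) :=
    integral_Iic_sub_Iic hint.integrableOn hint.integrableOn
  have h2 : (∫ t in (-x)..(0:ℝ), Real.exp (-(t ^ 2) / 2))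
      = ∫ t in (0:ℝ)..x, Real.exp (-(t ^ 2) / 2) := by
    rw [show (∫ t in (-x)..(0:ℝ), Real.exp (-(t ^ 2) / 2))
        = ∫ t in (-x)..(0:ℝ), Real.exp (-((-t) ^ 2) / 2) by simp]
    rw [intervalIntegral.integral_comp_neg (fun t => Real.exp (-(t ^ 2) / 2))]
    norm_num
  have h3 : (∫ t in (-x)..x, Real.exp (-(t ^ 2) / 2))
      = (∫ t in (-x)..(0:ℝ), Real.exp (-(t ^ 2) / 2))
        + ∫ t in (0:ℝ)..x, Real.exp (-(t ^ 2) / 2) :=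
    (integral_add_adjacent_intervals hint.intervalIntegrable hint.intervalIntegrable).symm
  have hFG : (∫ t in Set.Iic x, Real.exp (-(t ^ 2) / 2))
      - (∫ t in Set.Iic (-x), Real.exp (-(t ^ 2) / 2))
      = 2 * ∫ t in (0:ℝ)..x, Real.exp (-(t ^ 2) / 2) := by
    rw [h1, h3, h2]; ring
  simp only [gelu, stdNormalCDF]
  linear_combination (1 / Real.sqrt (2 * Real.pi)) * x * hFG

lemma key_bound (x : ℝ) :
    |x * (∫ t in (0:ℝ)..x, Real.exp (-(t ^ 2) / 2)) - x ^ 2| ≤ x ^ 4 / 2 := by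
  have h : x * (∫ t in (0:ℝ)..x, Real.exp (-(t ^ 2) / 2)) - x ^ 2
      = x * ∫ t in (0:ℝ)..x, (Real.exp (-(t ^ 2) / 2) - 1) := by
    rw [intervalIntegral.integral_sub (f_integrable.intervalIntegrable) intervalIntegrable_const]
    simp; ring
  rw [h, abs_mul]
  have hb : |∫ t in (0:ℝ)..x, (Real.exp (-(t ^ 2) / 2) - 1)| ≤ x ^ 2 / 2 * |x - 0| := by
    rw [← Real.norm_eq_abs]
    apply intervalIntegral.norm_integral_le_of_norm_le_const
    intro t ht
    have ht2 : t ^ 2 ≤ x ^ 2 := by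
      rcases Set.mem_uIoc.mp ht with h | h
      · nlinarith [h.1, h.2]
      · nlinarith [h.1, h.2]
    rw [Real.norm_eq_abs, abs_sub_comm, abs_of_nonneg]
    · nlinarith [Real.add_one_le_exp (-(t^2)/2)]
    · nlinarith [Real.exp_le_one_iff.mpr (show -(t^2)/2 ≤ 0 by nlinarith [sq_nonneg t])]
  calc |x| * |∫ t in (0:ℝ)..x, (Real.exp (-(t ^ 2) / 2) - 1)|
      ≤ |x| * (x ^ 2 / 2 * |x - 0|) := by
        exact mul_le_mul_of_nonneg_left hb (abs_nonneg x)
    _ = x ^ 4 / 2 := by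
        rw [sub_zero]
        rcases abs_cases x with ⟨h, _⟩ | ⟨h, _⟩ <;> rw [h] <;> ring

/-- For `M > 0`, `λ > 2M`, and `a, b ∈ [-M, M]`, we have `|o(a,b) − ab| ≤ 100·M³/λ`. -/
theorem geluProd_approx_mul (M lam : ℝ) (hM : 0 < M) (hlam : 2 * M < lam)
    (a b : ℝ) (ha : a ∈ Set.Icc (-M) M) (hb : b ∈ Set.Icc (-M) M) :
    |geluProd lam a b - a * b| ≤ 100 * M ^ 3 / lam := by
  have hlam0 : 0 < lam := by linarith
  have hsqrt : 0 < Real.sqrt (2 * Real.pi) := Real.sqrt_pos.mpr (by positivity)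
  set u := (a + b) / lam with hu
  set v := (a - b) / lam with hv
  set G : ℝ → ℝ := fun x => ∫ t in (0:ℝ)..x, Real.exp (-(t ^ 2) / 2) with hG
  have hrw : geluProd lam a b = lam ^ 2 / 4 * (u * G u - v * G v) := by
    have e1 : (-a - b) / lam = -u := by rw [hu]; ring
    have e2 : (-a + b) / lam = -v := by rw [hv]; ring
    have g1 := gelu_add_neg u
    have g2 := gelu_add_neg v
    simp only [geluProd, e1, e2, ← hu, ← hv]
    rw [show gelu ((a+b)/lam) + gelu (-u) - gelu ((a-b)/lam) - gelu (-v)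
        = (gelu u + gelu (-u)) - (gelu v + gelu (-v)) by rw [← hu, ← hv]; ring,
      g1, g2]
    field_simp
    simp only [hG]; ring_nf
  have hab : a * b = lam ^ 2 / 4 * (u ^ 2 - v ^ 2) := by
    rw [hu, hv]; field_simp; ring
  rw [hrw, hab]
  have h1 := key_bound u
  have h2 := key_bound v
  have habs : |lam ^ 2 / 4 * (u * G u - v * G v) - lam ^ 2 / 4 * (u ^ 2 - v ^ 2)|
      = lam ^ 2 / 4 * |(u * G u - u ^ 2) - (v * G v - v ^ 2)| := by
    rw [show lam ^ 2 / 4 * (u * G u - v * G v) - lam ^ 2 / 4 * (u ^ 2 - v ^ 2)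
        = lam ^ 2 / 4 * ((u * G u - u ^ 2) - (v * G v - v ^ 2)) by ring,
      abs_mul, abs_of_nonneg (show (0:ℝ) ≤ lam ^ 2 / 4 by positivity)]
  rw [habs]
  have hX : |(u * G u - u ^ 2) - (v * G v - v ^ 2)| ≤ u ^ 4 / 2 + v ^ 4 / 2 :=
    (abs_sub _ _).trans (add_le_add h1 h2)
  have s1 : (a + b) ^ 2 ≤ 4 * M ^ 2 := by nlinarith [ha.1, ha.2, hb.1, hb.2]
  have s2 : (a - b) ^ 2 ≤ 4 * M ^ 2 := by nlinarith [ha.1, ha.2, hb.1, hb.2]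
  have h4u : (a + b) ^ 4 ≤ 16 * M ^ 4 := by nlinarith [sq_nonneg ((a+b)^2), sq_nonneg (a+b)]
  have h4v : (a - b) ^ 4 ≤ 16 * M ^ 4 := by nlinarith [sq_nonneg ((a-b)^2), sq_nonneg (a-b)]
  calc lam ^ 2 / 4 * |(u * G u - u ^ 2) - (v * G v - v ^ 2)|
      ≤ lam ^ 2 / 4 * (u ^ 4 / 2 + v ^ 4 / 2) :=
        mul_le_mul_of_nonneg_left hX (by positivity)
    _ = ((a + b) ^ 4 + (a - b) ^ 4) / (8 * lam ^ 2) := by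
        rw [hu, hv]; field_simp; ring
    _ ≤ 100 * M ^ 3 / lam := by
        rw [div_le_div_iff₀ (by positivity) hlam0]
        have k1 : ((a + b) ^ 4 + (a - b) ^ 4) * lam ≤ 32 * M ^ 4 * lam :=
          mul_le_mul_of_nonneg_right (by linarith) hlam0.le
        have k2 : 0 < M ^ 3 * lam * (100 * lam - 4 * M) := by
          apply mul_pos (mul_pos (pow_pos hM 3) hlam0); linarith
        nlinarith [k1, k2]
end
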